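/- arXiv:2411.10394 — 2 statements merged into one kernel-verified Lean document; each statement's English description precedes it below -/
import Mathlib

section
/- Fix a DAG G = ([n], E) with weights w ∈ ℝ^E and weight matrix C, and let G* = ([n], E*) be its transitive closure with shortest-path weights w*. For weights w' ∈ ℝ^{E*} on G* with weight matrix C', one has Q(C') = Q(C) if and only if w' lies in the pointed polyhedral cone w* + cone(e_{j→i} : j→i ∈ E* \ E^♭_w); equivalently, if and only if w'(e) = w*(e) for every edge e of G^♭_w and w'(e) ≥ w*(e) for every edge e ∈ E* \ E^♭_w. -/
open scoped Classical
noncomputable section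

/-- The min-plus tropical semiring `T = ℝ ∪ {∞}` with `⊕ = min` and `⊙ = +`. -/
abbrev Trop : Type := WithTop ℝ

/-- Min-plus identity matrix: `0` on the diagonal, `∞` off the diagonal. -/
def mpId {n : ℕ} : Matrix (Fin n) (Fin n) Trop := fun i j => if i = j then 0 else ⊤

/-- Min-plus matrix product. -/
def mpMul {n : ℕ} (A B : Matrix (Fin n) (Fin n) Trop) : Matrix (Fin n) (Fin n) Trop :=
  fun i j => Finset.univ.inf fun k => A i k + B k j

/-- Entrywise minimum (tropical sum) of matrices. -/
def mpAdd {n : ℕ} (A B : Matrix (Fin n) (Fin n) Trop) : Matrix (Fin n) (Fin n) Trop :=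
  fun i j => A i j ⊓ B i j

/-- Min-plus matrix power. -/
def mpPow {n : ℕ} (A : Matrix (Fin n) (Fin n) Trop) : ℕ → Matrix (Fin n) (Fin n) Trop
  | 0 => mpId
  | k + 1 => mpMul (mpPow A k) A

/-- Kleene star `A* = I ⊕ A ⊕ A^{⊙2} ⊕ ⋯ ⊕ A^{⊙(n−1)}`. -/
def kleene {n : ℕ} (A : Matrix (Fin n) (Fin n) Trop) : Matrix (Fin n) (Fin n) Trop :=
  fun i j => (Finset.range n).inf fun k => mpPow A k i j

/-- `p` is a directed path from `j` to `i` in the digraph with edge relation `E`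
(`E a b` meaning there is an edge `a → b`), recorded as its list of vertices. -/
def IsPathFrom {n : ℕ} (E : Fin n → Fin n → Prop) (j i : Fin n) (p : List (Fin n)) : Prop :=
  p.head? = some j ∧ p.getLast? = some i ∧ p.Chain' E

/-- A digraph is acyclic if the only paths from a vertex to itself are trivial. -/
def IsDAG {n : ℕ} (E : Fin n → Fin n → Prop) : Prop :=
  ∀ (j : Fin n) (p : List (Fin n)), IsPathFrom E j j p → p.length ≤ 1

/-- `C ∈ T^{n×n}` is supported on the digraph `E` : zero diagonal, and for `i ≠ j`
the entry `c_ij` is finite exactly when `j → i` is an edge. -/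
def SupportedOn {n : ℕ} (C : Matrix (Fin n) (Fin n) Trop) (E : Fin n → Fin n → Prop) : Prop :=
  (∀ i, C i i = 0) ∧ ∀ i j, i ≠ j → (C i j ≠ ⊤ ↔ E j i)

/-- The edge weight function of a weight matrix: `cw C a b = c_{ba}` is the weight of
the edge `a → b`. -/
def cw {n : ℕ} (C : Matrix (Fin n) (Fin n) Trop) : Fin n → Fin n → ℝ :=
  fun a b => WithTop.untopD 0 (C b a)

/-- Total weight of a path (sum of the weights of its consecutive edges). -/
def pathWeight {n : ℕ} (w : Fin n → Fin n → ℝ) (p : List (Fin n)) : ℝ :=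
  ((p.zip p.tail).map fun q => w q.1 q.2).sum

/-- The edge `j → i` belongs to the weighted transitive reduction `G^♭_w`:
the single edge is the unique minimum-weight directed path from `j` to `i`. -/
def InWTR {n : ℕ} (E : Fin n → Fin n → Prop) (w : Fin n → Fin n → ℝ) (j i : Fin n) : Prop :=
  E j i ∧ ∀ p : List (Fin n), IsPathFrom E j i p → p ≠ [j, i] → w j i < pathWeight w p

/-- Weighted digraph polyhedron `Q(C) = {x : x_i − x_j ≤ c_ij}` (as the saturated
subset of `ℝ^n` representing a subset of `ℝ^n/ℝ𝟙`). -/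
def wdp {n : ℕ} (C : Matrix (Fin n) (Fin n) Trop) : Set (Fin n → ℝ) :=
  {x | ∀ i j, i ≠ j → ((x i - x j : ℝ) : Trop) ≤ C i j}

/-- The tropical polyhedron generated by the columns of `V`: all min-plus linear
combinations `V ⊙ λ`, `λ ∈ ℝ^n` (as a saturated subset of `ℝ^d`). -/
def tconvM {d n : ℕ} (V : Matrix (Fin d) (Fin n) Trop) : Set (Fin d → ℝ) :=
  {x | ∃ lam : Fin n → ℝ, ∀ i, (x i : Trop) = Finset.univ.inf fun j => V i j + (lam j : Trop)}

/-- `v` is reachable from `s`. -/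
def Reaches {n : ℕ} (E : Fin n → Fin n → Prop) (s v : Fin n) : Prop :=
  ∃ p, IsPathFrom E s v p

/-- Edges of the transitive closure `G*`: `j → i` with `i ≠ j` reachable from `j`. -/
def EStar {n : ℕ} (E : Fin n → Fin n → Prop) (j i : Fin n) : Prop :=
  j ≠ i ∧ ∃ p, IsPathFrom E j i p

theorem List.chain'_nil {α : Type*} {R : α → α → Prop} : List.Chain' R [] := List.IsChain.nil

@[simp] theorem List.chain'_singleton {α : Type*} {R : α → α → Prop} (a : α) :
    List.Chain' R [a] := by unfold List.Chain'; simp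

@[simp] theorem List.chain'_cons {α : Type*} {R : α → α → Prop} {a b : α} {l : List α} :
    List.Chain' R (a :: b :: l) ↔ R a b ∧ List.Chain' R (b :: l) := List.isChain_cons_cons

theorem List.chain'_cons' {α : Type*} {R : α → α → Prop} {x : α} {l : List α} :
    List.Chain' R (x :: l) ↔ (∀ y ∈ l.head?, R x y) ∧ List.Chain' R l := List.isChain_cons

theorem List.chain'_append {α : Type*} {R : α → α → Prop} {l₁ l₂ : List α} :
    List.Chain' R (l₁ ++ l₂) ↔
      List.Chain' R l₁ ∧ List.Chain' R l₂ ∧ ∀ x ∈ l₁.getLast?, ∀ y ∈ l₂.head?, R x y :=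
  List.isChain_append

theorem List.chain'_map {α β : Type*} {R : α → α → Prop} (f : β → α) {l : List β} :
    List.Chain' R (l.map f) ↔ List.Chain' (fun a b => R (f a) (f b)) l := by
  unfold List.Chain'; exact List.isChain_map ..

theorem List.chain'_iff_pairwise {α : Type*} {R : α → α → Prop} [IsTrans α R] {l : List α} :
    List.Chain' R l ↔ List.Pairwise R l := by
  unfold List.Chain'; exact List.isChain_iff_pairwise

theorem List.Chain'.imp {α : Type*} {R S : α → α → Prop} (H : ∀ a b, R a b → S a b)
    {l : List α} (p : List.Chain' R l) : List.Chain' S l := by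
  unfold List.Chain' at *; exact p.imp H

section Lemmas
variable {n : ℕ} {E S : Fin n → Fin n → Prop} {w : Fin n → Fin n → ℝ}


lemma pathWeight_nil : pathWeight w [] = 0 := rfl
lemma pathWeight_single (a : Fin n) : pathWeight w [a] = 0 := rfl
lemma pathWeight_cons (a b : Fin n) (t : List (Fin n)) :
    pathWeight w (a :: b :: t) = w a b + pathWeight w (b :: t) := by
  simp [pathWeight]

lemma pathWeight_append (xs : List (Fin n)) (a : Fin n) (ys : List (Fin n)) :
    pathWeight w (xs ++ a :: ys) = pathWeight w (xs ++ [a]) + pathWeight w (a :: ys) := by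
  induction xs with
  | nil => simp [pathWeight_single, pathWeight]
  | cons x xs ih =>
    cases xs with
    | nil => simp [pathWeight_cons, pathWeight_single, pathWeight]
    | cons x' xs' =>
      simp only [List.cons_append, pathWeight_cons] at *
      rw [ih]; ring

lemma telescope {x : Fin n → ℝ} (hx : ∀ a b, S a b → x b - x a ≤ w a b) :
    ∀ (p : List (Fin n)) (j i : Fin n), p.Chain' S → p.head? = some j →
      p.getLast? = some i → x i - x j ≤ pathWeight w p := by
  intro p
  induction p with
  | nil => intro j i _ h; simp at h
  | cons a t ih =>
    intro j i hc hh hl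
    cases t with
    | nil =>
      simp at hh hl; subst hh; subst hl; simp [pathWeight_single]
    | cons b t' =>
      simp only [List.head?_cons, Option.some.injEq] at hh; subst hh
      rw [List.getLast?_cons_cons] at hl
      rw [List.chain'_cons] at hc
      have h1 := ih b i hc.2 rfl hl
      have h2 := hx _ _ hc.1
      rw [pathWeight_cons]; linarith

lemma path_concat {a b c : Fin n} {p q : List (Fin n)}
    (hp : IsPathFrom S a b p) (hq : IsPathFrom S b c q) :
    IsPathFrom S a c (p ++ q.tail) ∧
      pathWeight w (p ++ q.tail) = pathWeight w p + pathWeight w q := by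
  obtain ⟨hp1, hp2, hp3⟩ := hp
  obtain ⟨hq1, hq2, hq3⟩ := hq
  obtain ⟨t, rfl⟩ : ∃ t, q = b :: t := by
    cases q with
    | nil => simp at hq1
    | cons u t => simp at hq1; subst hq1; exact ⟨t, rfl⟩
  obtain ⟨p', rfl⟩ := List.getLast?_eq_some_iff.mp hp2
  cases t with
  | nil =>
    simp at hq2
    subst hq2
    refine ⟨⟨by simpa using hp1, ?_, by simpa using hp3⟩, by simp [pathWeight_single]⟩
    simpa using hp2
  | cons u t' =>
    have hlast : ((p' ++ [b]) ++ (u :: t')).getLast? = some c := by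
      rw [List.getLast?_append]
      rw [List.getLast?_cons_cons] at hq2
      rw [hq2]; rfl
    refine ⟨⟨?_, hlast, ?_⟩, ?_⟩
    · rw [List.head?_append] at hp1 ⊢
      cases p' with
      | nil => simpa using hp1
      | cons _ _ => simpa using hp1
    · rw [List.chain'_append]
      refine ⟨hp3, (List.chain'_cons.mp hq3).2, ?_⟩
      intro x hx y hy
      simp at hx hy
      subst hx; subst hy
      exact (List.chain'_cons.mp hq3).1
    · show pathWeight w ((p' ++ [b]) ++ (u :: t')) = _
      have h3 : (p' ++ [b]) ++ (u :: t') = p' ++ (b :: u :: t') := by simp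
      rw [h3, pathWeight_append p' b (u :: t')]


-- a path is nonempty and if from j to i with j ≠ i it has length ≥ 2
lemma path_length_two {j i : Fin n} {p : List (Fin n)} (h : IsPathFrom S j i p)
    (hne : j ≠ i) : 2 ≤ p.length := by
  obtain ⟨h1, h2, _⟩ := h
  match p with
  | [] => simp at h1
  | [a] => simp at h1 h2; subst h1; subst h2; exact absurd rfl hne
  | a :: b :: t => simp [Nat.succ_le_succ]

lemma path_concat' {a b c : Fin n} {p q : List (Fin n)}
    (hp : IsPathFrom S a b p) (hq : IsPathFrom S b c q) :
    IsPathFrom S a c (p ++ q.tail) :=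
  (path_concat (w := fun _ _ => 0) hp hq).1

lemma reaches_trans {a b c : Fin n} (h1 : Reaches S a b) (h2 : Reaches S b c) :
    Reaches S a c := by
  obtain ⟨p, hp⟩ := h1; obtain ⟨q, hq⟩ := h2
  exact ⟨_, path_concat' hp hq⟩

lemma reaches_refl (a : Fin n) : Reaches S a a := ⟨[a], by simp [IsPathFrom]⟩

lemma dag_edge_ne (hdag : IsDAG S) {a b : Fin n} (h : S a b) : a ≠ b := by
  intro rfl'
  have : IsPathFrom S a a [a, b] := by subst rfl'; exact ⟨rfl, rfl, by simp [h]⟩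
  subst rfl'
  simpa using hdag a [a, a] this

lemma edge_estar (hdag : IsDAG S) {a b : Fin n} (h : S a b) : EStar S a b :=
  ⟨dag_edge_ne hdag h, [a, b], rfl, rfl, by simp [h]⟩

lemma estar_reaches {a b : Fin n} (h : EStar S a b) : Reaches S a b := h.2

/-- rank potential -/
def rk (S : Fin n → Fin n → Prop) (v : Fin n) : ℕ :=
  (Finset.univ.filter (fun u => Reaches S u v)).card

lemma rk_lt_of_estar (hdag : IsDAG S) {a b : Fin n} (h : EStar S a b) :
    rk S a < rk S b := by
  apply Finset.card_lt_card
  constructor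
  · intro u hu
    simp only [Finset.mem_filter, Finset.mem_univ, true_and, rk] at *
    exact reaches_trans hu (estar_reaches h)
  · intro hsub
    have hb : b ∈ Finset.univ.filter (fun u => Reaches S u b) := by
      simp [reaches_refl]
    have hba := hsub hb
    simp only [Finset.mem_filter, Finset.mem_univ, true_and] at hba
    -- b reaches a, and a reaches b with length ≥ 2 : closed path of length ≥ 2
    obtain ⟨q, hq⟩ := hba
    obtain ⟨p, hp⟩ := h.2
    have hlen := path_length_two hp h.1
    have hcat := path_concat' hp hq
    have := hdag a _ hcat
    have : (p ++ q.tail).length ≤ 1 := this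
    rw [List.length_append] at this
    omega

lemma rk_lt_of_edge (hdag : IsDAG S) {a b : Fin n} (h : S a b) : rk S a < rk S b :=
  rk_lt_of_estar hdag (edge_estar hdag h)

/-- chains have length ≤ n -/
lemma chain_length_le {p : List (Fin n)} (hc : p.Chain' S)
    (hmono : ∀ a b, S a b → rk S a < rk S b) : p.length ≤ n := by
  have hnd : p.Nodup := by
    have h1 : (p.map (rk S)).Chain' (· < ·) := by
      rw [List.chain'_map]; exact List.Chain'.imp (fun a b h => hmono _ _ h) hc
    have h2 : (p.map (rk S)).Pairwise (· < ·) := List.chain'_iff_pairwise.mp h1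
    have h3 : p.Pairwise (fun a b => rk S a < rk S b) := List.pairwise_map.mp h2
    exact (h3.imp (fun h => by intro he; subst he; exact lt_irrefl _ h))
  simpa using hnd.length_le_card

lemma chain_rk_le {p : List (Fin n)} {j i : Fin n} {f : Fin n → ℕ}
    (hmono : ∀ a b, S a b → f a < f b) :
    p.Chain' S → p.head? = some j → p.getLast? = some i → f j ≤ f i := by
  induction p generalizing j with
  | nil => intro _ h; simp at h
  | cons a t ih =>
    intro hc hh hl
    cases t with
    | nil => simp at hh hl; subst hh; subst hl; rfl
    | cons b t' =>
      simp only [List.head?_cons, Option.some.injEq] at hh; subst hh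
      rw [List.getLast?_cons_cons] at hl
      rw [List.chain'_cons] at hc
      exact le_trans (le_of_lt (hmono _ _ hc.1)) (ih hc.2 rfl hl)

lemma estar_dag (hdag : IsDAG E) : IsDAG (EStar E) := by
  intro j p hp
  by_contra hlen
  push_neg at hlen
  obtain ⟨h1, h2, h3⟩ := hp
  match p, hlen with
  | a :: b :: t, _ =>
    simp only [List.head?_cons, Option.some.injEq] at h1
    rw [List.getLast?_cons_cons] at h2
    rw [List.chain'_cons] at h3
    subst h1
    have hab : rk E a < rk E b := rk_lt_of_estar hdag h3.1
    have hbj : rk E b ≤ rk E a :=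
      chain_rk_le (S := EStar E) (f := rk E) (fun a b h => rk_lt_of_estar hdag h) h3.2 rfl h2
    omega

end Lemmas

section KleeneLemmas
variable {n : ℕ} {S : Fin n → Fin n → Prop} {C : Matrix (Fin n) (Fin n) Trop}

lemma cw_eq {a b : Fin n} (h : C b a ≠ ⊤) : C b a = ((cw C a b : ℝ) : Trop) := by
  obtain ⟨c, hc⟩ := WithTop.ne_top_iff_exists.mp h
  rw [← hc]; simp [cw, ← hc]

lemma mpPow_le_path (hdag : IsDAG S) (hsupp : SupportedOn C S) :
    ∀ (k : ℕ) (p : List (Fin n)) (j i : Fin n), p.Chain' S → p.head? = some j →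
      p.getLast? = some i → p.length ≤ k + 1 →
      mpPow C k i j ≤ (pathWeight (cw C) p : Trop) := by
  intro k
  induction k with
  | zero =>
    intro p j i hc hh hl hlen
    match p, hlen with
    | [a], _ =>
      simp only [List.head?_cons, Option.some.injEq] at hh
      simp only [List.getLast?_singleton, Option.some.injEq] at hl
      subst hh; subst hl
      simp [mpPow, mpId, pathWeight_single]
  | succ k ih =>
    intro p j i hc hh hl hlen
    cases p with
    | nil => simp at hh
    | cons a t =>
      simp only [List.head?_cons, Option.some.injEq] at hh; subst hh
      cases t with
      | nil =>
        simp only [List.getLast?_singleton, Option.some.injEq] at hl; subst hl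
        have h1 : mpPow C (k+1) a a ≤ mpPow C k a a + C a a := by
          simp only [mpPow, mpMul]
          exact Finset.inf_le (Finset.mem_univ a)
        have h2 := ih [a] a a (by simp) rfl rfl (by simp)
        rw [pathWeight_single] at h2 ⊢
        calc mpPow C (k+1) a a ≤ mpPow C k a a + C a a := h1
          _ ≤ ((0:ℝ) : Trop) + 0 := by rw [hsupp.1 a]; exact add_le_add_left h2 0
          _ = ((0:ℝ) : Trop) := by simp
      | cons b t' =>
        rw [List.getLast?_cons_cons] at hl
        rw [List.chain'_cons] at hc
        have hedge : S a b := hc.1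
        have hne : a ≠ b := dag_edge_ne hdag hedge
        have hCbj : C b a ≠ ⊤ := (hsupp.2 b a (Ne.symm hne)).mpr hedge
        have h1 : mpPow C (k+1) i a ≤ mpPow C k i b + C b a := by
          simp only [mpPow, mpMul]
          exact Finset.inf_le (Finset.mem_univ b)
        have h2 := ih (b :: t') b i hc.2 rfl hl (by simpa using Nat.le_of_succ_le_succ hlen)
        calc mpPow C (k+1) i a ≤ mpPow C k i b + C b a := h1
          _ ≤ ((pathWeight (cw C) (b :: t') : ℝ) : Trop) + ((cw C a b : ℝ) : Trop) :=
            add_le_add h2 (le_of_eq (cw_eq hCbj))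
          _ = (((cw C a b + pathWeight (cw C) (b :: t') : ℝ)) : Trop) := by
            rw [← WithTop.coe_add, add_comm]
          _ = ((pathWeight (cw C) (a :: b :: t') : ℝ) : Trop) := by rw [pathWeight_cons]

lemma exists_path_of_mpPow (hsupp : SupportedOn C S) :
    ∀ (k : ℕ) (j i : Fin n), mpPow C k i j ≠ ⊤ →
      ∃ p, IsPathFrom S j i p ∧ (pathWeight (cw C) p : Trop) ≤ mpPow C k i j := by
  intro k
  induction k with
  | zero =>
    intro j i h
    simp only [mpPow, mpId] at h ⊢
    by_cases hij : i = j
    · subst hij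
      exact ⟨[i], ⟨rfl, rfl, by simp⟩, by simp [pathWeight_single]⟩
    · simp [hij] at h
  | succ k ih =>
    intro j i h
    have hrw : mpPow C (k+1) i j = Finset.univ.inf (fun v => mpPow C k i v + C v j) := rfl
    obtain ⟨v, -, hv⟩ := Finset.exists_mem_eq_inf Finset.univ
      (⟨i, Finset.mem_univ i⟩ : (Finset.univ : Finset (Fin n)).Nonempty)
      (fun v => mpPow C k i v + C v j)
    rw [hrw, hv] at h ⊢
    obtain ⟨h1, h2⟩ := WithTop.add_ne_top.mp h
    obtain ⟨q, hq, hqw⟩ := ih v i h1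
    by_cases hvj : v = j
    · subst hvj
      refine ⟨q, hq, ?_⟩
      rw [hsupp.1 v, add_zero]
      exact hqw
    · have hedge : S j v := (hsupp.2 v j hvj).mp h2
      obtain ⟨t, rfl⟩ : ∃ t, q = v :: t := by
        obtain ⟨hq1, -, -⟩ := hq
        cases q with
        | nil => simp at hq1
        | cons u t => simp only [List.head?_cons, Option.some.injEq] at hq1; subst hq1; exact ⟨t, rfl⟩
      refine ⟨j :: v :: t, ⟨rfl, ?_, ?_⟩, ?_⟩
      · rw [List.getLast?_cons_cons]; exact hq.2.1
      · rw [List.chain'_cons]; exact ⟨hedge, hq.2.2⟩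
      · rw [pathWeight_cons, WithTop.coe_add, cw_eq h2, add_comm]
        exact add_le_add hqw le_rfl

lemma kleene_le_mpPow {k : ℕ} (hk : k < n) (i j : Fin n) :
    kleene C i j ≤ mpPow C k i j :=
  Finset.inf_le (Finset.mem_range.mpr hk)

lemma kleene_le_path (hdag : IsDAG S) (hsupp : SupportedOn C S)
    (hmono : ∀ a b, S a b → rk S a < rk S b)
    {p : List (Fin n)} {j i : Fin n} (hp : IsPathFrom S j i p) :
    kleene C i j ≤ (pathWeight (cw C) p : Trop) := by
  have hn : 0 < n := i.pos
  have hlen : p.length ≤ n := chain_length_le hp.2.2 hmono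
  have h1 : p.length ≤ (n - 1) + 1 := by omega
  exact le_trans (kleene_le_mpPow (by omega) i j)
    (mpPow_le_path hdag hsupp (n-1) p j i hp.2.2 hp.1 hp.2.1 h1)

lemma exists_path_of_kleene (hsupp : SupportedOn C S) {j i : Fin n}
    (h : kleene C i j ≠ ⊤) :
    ∃ p, IsPathFrom S j i p ∧ (pathWeight (cw C) p : Trop) ≤ kleene C i j := by
  have hn : 0 < n := i.pos
  obtain ⟨k, -, hk⟩ := Finset.exists_mem_eq_inf (Finset.range n)
    (by simp [Finset.nonempty_range_iff]; omega) (fun k => mpPow C k i j)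
  rw [show kleene C i j = (Finset.range n).inf (fun k => mpPow C k i j) from rfl, hk] at h ⊢
  exact exists_path_of_mpPow hsupp k j i h

lemma kleene_diag (hdag : IsDAG S) (hsupp : SupportedOn C S) (i : Fin n) :
    kleene C i i = 0 := by
  have hn : 0 < n := i.pos
  have hle : kleene C i i ≤ 0 := by
    refine le_trans (kleene_le_mpPow hn i i) ?_
    simp [mpPow, mpId]
  have hge : (0 : Trop) ≤ kleene C i i := by
    by_cases h : kleene C i i = ⊤
    · simp [h]
    · obtain ⟨p, hp, hpw⟩ := exists_path_of_kleene hsupp h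
      have hlen := hdag i p hp
      obtain ⟨a, rfl⟩ : ∃ a, p = [a] := by
        match p, hlen with
        | [a], _ => exact ⟨a, rfl⟩
        | [], _ => simp [IsPathFrom] at hp
      rw [pathWeight_single] at hpw
      simpa using hpw
  exact le_antisymm hle hge

lemma kleene_le_self (hdag : IsDAG S) (hsupp : SupportedOn C S) (i j : Fin n) :
    kleene C i j ≤ C i j := by
  by_cases hij : i = j
  · subst hij; rw [kleene_diag hdag hsupp, hsupp.1]
  · by_cases h : C i j = ⊤
    · simp [h]
    · have hedge : S j i := (hsupp.2 i j hij).mp h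
      have hp : IsPathFrom S j i [j, i] := ⟨rfl, rfl, by simp [hedge]⟩
      have := kleene_le_path hdag hsupp (fun a b hab => rk_lt_of_edge hdag hab) hp
      rw [pathWeight_cons, pathWeight_single, add_zero] at this
      rw [cw_eq h]
      exact this

lemma kleene_triangle (hdag : IsDAG S) (hsupp : SupportedOn C S) (i v j : Fin n) :
    kleene C i j ≤ kleene C i v + kleene C v j := by
  by_cases h1 : kleene C i v = ⊤
  · simp [h1]
  by_cases h2 : kleene C v j = ⊤
  · simp [h2]
  obtain ⟨q, hq, hqw⟩ := exists_path_of_kleene hsupp h1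
  obtain ⟨p, hp, hpw⟩ := exists_path_of_kleene hsupp h2
  obtain ⟨hcat, hcatw⟩ := path_concat (w := cw C) hp hq
  calc kleene C i j ≤ (pathWeight (cw C) (p ++ q.tail) : Trop) :=
        kleene_le_path hdag hsupp (fun a b hab => rk_lt_of_edge hdag hab) hcat
    _ = ((pathWeight (cw C) p : ℝ) : Trop) + (pathWeight (cw C) q : Trop) := by
        rw [hcatw, WithTop.coe_add]
    _ ≤ kleene C v j + kleene C i v := add_le_add hpw hqw
    _ = kleene C i v + kleene C v j := add_comm _ _

lemma wdp_le_kleene (hdag : IsDAG S) (hsupp : SupportedOn C S) {x : Fin n → ℝ}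
    (hx : x ∈ wdp C) (i j : Fin n) :
    ((x i - x j : ℝ) : Trop) ≤ kleene C i j := by
  by_cases h : kleene C i j = ⊤
  · simp [h]
  obtain ⟨p, hp, hpw⟩ := exists_path_of_kleene hsupp h
  have hbound : ∀ a b, S a b → x b - x a ≤ cw C a b := by
    intro a b hab
    have hne : a ≠ b := dag_edge_ne hdag hab
    have hC : C b a ≠ ⊤ := (hsupp.2 b a (Ne.symm hne)).mpr hab
    have := hx b a (Ne.symm hne)
    rw [cw_eq hC] at this
    exact_mod_cast this
  have := telescope hbound p j i hp.2.2 hp.1 hp.2.1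
  exact le_trans (by exact_mod_cast this) hpw

end KleeneLemmas

section WTRLemmas
variable {n : ℕ} {E S : Fin n → Fin n → Prop} {C : Matrix (Fin n) (Fin n) Trop}

lemma getLast?_cons_ne {α : Type*} {t : List α} (ht : t ≠ []) (a : α) :
    (a :: t).getLast? = t.getLast? := by
  cases h : t.getLast? with
  | none => exact absurd (List.getLast?_eq_none_iff.mp h) ht
  | some z =>
    show ([a] ++ t).getLast? = some z
    rw [List.getLast?_append, h]
    rfl

lemma exists_bad_edge {R : Fin n → Fin n → Prop} :
    ∀ p : List (Fin n), p.Chain' S → ¬ p.Chain' R →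
      ∃ u a b v, p = u ++ a :: b :: v ∧ S a b ∧ ¬ R a b := by
  intro p
  induction p with
  | nil => intro _ h; exact absurd List.chain'_nil h
  | cons a t ih =>
    intro hc hr
    cases t with
    | nil => exact absurd (List.chain'_singleton a) hr
    | cons b t' =>
      rw [List.chain'_cons] at hc
      by_cases hab : R a b
      · have hnr : ¬ (b :: t').Chain' R := fun h => hr (List.chain'_cons.mpr ⟨hab, h⟩)
        obtain ⟨u, a', b', v, heq, hS, hR⟩ := ih hc.2 hnr
        exact ⟨a :: u, a', b', v, by rw [heq]; simp, hS, hR⟩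
      · exact ⟨[], a, b, t', rfl, hc.1, hab⟩

lemma wtr_replace (hdag : IsDAG E) (hsupp : SupportedOn C E) :
    ∀ (fuel : ℕ) (p : List (Fin n)) (j i : Fin n), IsPathFrom E j i p →
      n + 1 - p.length ≤ fuel →
      ∃ q, IsPathFrom E j i q ∧ q.Chain' (InWTR E (cw C)) ∧
        pathWeight (cw C) q ≤ pathWeight (cw C) p := by
  intro fuel
  induction fuel with
  | zero =>
    intro p j i hp hf
    have h1 : p.length ≤ n := chain_length_le hp.2.2 (fun a b h => rk_lt_of_edge hdag h)
    omega
  | succ f ih =>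
    intro p j i hp hf
    by_cases hwtr : p.Chain' (InWTR E (cw C))
    · exact ⟨p, hp, hwtr, le_rfl⟩
    obtain ⟨u, a, b, v, rfl, hS, hR⟩ := exists_bad_edge p hp.2.2 hwtr
    have hR' : ∃ s, IsPathFrom E a b s ∧ s ≠ [a, b] ∧ pathWeight (cw C) s ≤ cw C a b := by
      rw [InWTR] at hR
      push_neg at hR
      obtain ⟨s, hs1, hs2, hs3⟩ := hR hS
      exact ⟨s, hs1, hs2, hs3⟩
    obtain ⟨s, hs, hsne, hsw⟩ := hR'
    have hab : a ≠ b := dag_edge_ne hdag hS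
    obtain ⟨t, rfl⟩ : ∃ t, s = a :: t := by
      obtain ⟨hs1, -, -⟩ := hs
      cases s with
      | nil => simp at hs1
      | cons x t => simp only [List.head?_cons, Option.some.injEq] at hs1; subst hs1; exact ⟨t, rfl⟩
    have ht : t ≠ [] := by
      rintro rfl
      have := hs.2.1
      simp at this
      exact hab this
    obtain ⟨t₂, rfl⟩ : ∃ t₂, t = t₂ ++ [b] := by
      have h2 := hs.2.1
      rw [getLast?_cons_ne ht] at h2
      exact List.getLast?_eq_some_iff.mp h2
    have ht2 : t₂ ≠ [] := by rintro rfl; simp at hsne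
    -- the spliced path
    set p' : List (Fin n) := u ++ a :: (t₂ ++ b :: v) with hp'def
    -- chain facts for p
    have hchain := hp.2.2
    rw [List.chain'_append] at hchain
    obtain ⟨hcu, hcabv, hbd⟩ := hchain
    rw [List.chain'_cons] at hcabv
    have hcbv : (b :: v).Chain' E := hcabv.2
    -- chain of p'
    have hchain' : p'.Chain' E := by
      have heq : p' = u ++ ((a :: (t₂ ++ [b])) ++ v) := by simp [hp'def]
      rw [heq, List.chain'_append]
      refine ⟨hcu, ?_, ?_⟩
      · rw [List.chain'_append]
        refine ⟨hs.2.2, (List.chain'_cons'.mp hcbv).2, ?_⟩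
        intro x hx y hy
        have hx' : x = b := by
          rw [getLast?_cons_ne (by simp : t₂ ++ [b] ≠ []) a] at hx
          exact (by simpa using hx : b = x).symm
        subst hx'
        exact (List.chain'_cons'.mp hcbv).1 y hy
      · intro x hx y hy
        simp only [List.cons_append, List.head?_cons, Option.mem_def, Option.some.injEq] at hy
        subst hy
        exact hbd x hx a rfl
    -- head of p'
    have hhead' : p'.head? = some j := by
      have := hp.1
      cases u with
      | nil => simpa [hp'def] using this
      | cons c u' => simpa [hp'def] using this
    -- last of p'
    have hlast' : p'.getLast? = some i := by
      have hpl := hp.2.1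
      have e1 : u ++ a :: b :: v = (u ++ [a]) ++ b :: v := by simp
      have e2 : p' = (u ++ a :: t₂) ++ b :: v := by simp [hp'def]
      rw [e1, List.getLast?_append] at hpl
      rw [e2, List.getLast?_append]
      cases h : (b :: v).getLast? with
      | none => exact absurd h (by simp)
      | some z =>
        rw [h] at hpl
        exact hpl
    -- weights
    have hw : pathWeight (cw C) p' ≤ pathWeight (cw C) (u ++ a :: b :: v) := by
      have e3 : pathWeight (cw C) (u ++ a :: b :: v)
          = pathWeight (cw C) (u ++ [a]) + (cw C a b + pathWeight (cw C) (b :: v)) := by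
        rw [pathWeight_append u a (b :: v), pathWeight_cons]
      have e4 : pathWeight (cw C) p'
          = pathWeight (cw C) (u ++ [a]) + (pathWeight (cw C) (a :: (t₂ ++ [b]))
            + pathWeight (cw C) (b :: v)) := by
        rw [hp'def, pathWeight_append u a (t₂ ++ b :: v)]
        have e5 : a :: (t₂ ++ b :: v) = (a :: t₂) ++ b :: v := by simp
        rw [e5, pathWeight_append (a :: t₂) b v]
        simp
      rw [e3, e4]
      have := hsw
      linarith
    -- length
    have hlen' : (u ++ a :: b :: v).length + 1 ≤ p'.length := by
      simp only [hp'def, List.length_append, List.length_cons]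
      have : 1 ≤ t₂.length := by
        cases t₂ with
        | nil => exact absurd rfl ht2
        | cons _ _ => simp
      omega
    obtain ⟨q, hq, hqwtr, hqw⟩ := ih p' j i ⟨hhead', hlast', hchain'⟩ (by omega)
    exact ⟨q, hq, hqwtr, le_trans hqw hw⟩

lemma kleene_eq_of_wtr (hdag : IsDAG E) (hsupp : SupportedOn C E) {a b : Fin n}
    (h : InWTR E (cw C) a b) : kleene C b a = ((cw C a b : ℝ) : Trop) := by
  have hne : a ≠ b := dag_edge_ne hdag h.1
  have hC : C b a ≠ ⊤ := (hsupp.2 b a (Ne.symm hne)).mpr h.1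
  have hle : kleene C b a ≤ ((cw C a b : ℝ) : Trop) := by
    rw [← cw_eq hC]; exact kleene_le_self hdag hsupp b a
  have hnt : kleene C b a ≠ ⊤ := by
    intro htop
    rw [htop] at hle
    exact WithTop.coe_ne_top (top_le_iff.mp hle)
  obtain ⟨p, hp, hpw⟩ := exists_path_of_kleene hsupp hnt
  by_cases hpe : p = [a, b]
  · subst hpe
    rw [pathWeight_cons, pathWeight_single, add_zero] at hpw
    exact le_antisymm hle hpw
  · exfalso
    have hlt := h.2 p hp hpe
    have : (pathWeight (cw C) p : Trop) ≤ ((cw C a b : ℝ) : Trop) := le_trans hpw hle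
    rw [WithTop.coe_le_coe] at this
    linarith

end WTRLemmas

section Points
variable {n : ℕ} {E S : Fin n → Fin n → Prop} {C : Matrix (Fin n) (Fin n) Trop}

lemma colpt_mem (hdag : IsDAG S) (hsupp : SupportedOn C S) {y : Fin n → ℝ}
    (hy : y ∈ wdp C) (M : ℝ) (j : Fin n) :
    (fun v => min ((kleene C v j).untopD (M + y v)) (M + y v)) ∈ wdp C := by
  intro a b hab
  by_cases hB : C a b = ⊤
  · simp [hB]
  obtain ⟨c, hc⟩ := WithTop.ne_top_iff_exists.mp hB
  rw [← hc, WithTop.coe_le_coe]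
  have hyab : y a - y b ≤ c := by
    have := hy a b hab
    rw [← hc, WithTop.coe_le_coe] at this
    exact this
  have htri : kleene C a j ≤ C a b + kleene C b j :=
    le_trans (kleene_triangle hdag hsupp a b j)
      (add_le_add_left (kleene_le_self hdag hsupp a b) _)
  simp only
  by_cases hKB : kleene C b j = ⊤
  · rw [hKB]
    have h1 : (⊤ : Trop).untopD (M + y b) = M + y b := rfl
    rw [h1, min_self]
    have h2 : min ((kleene C a j).untopD (M + y a)) (M + y a) ≤ M + y a := min_le_right _ _
    linarith
  · obtain ⟨t, ht⟩ := WithTop.ne_top_iff_exists.mp hKB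
    have hKA : kleene C a j ≤ ((c + t : ℝ) : Trop) := by
      rw [WithTop.coe_add, hc, ht]; exact htri
    have hKAnt : kleene C a j ≠ ⊤ := fun h => by
      rw [h] at hKA; exact WithTop.coe_ne_top (top_le_iff.mp hKA)
    obtain ⟨s, hs⟩ := WithTop.ne_top_iff_exists.mp hKAnt
    have hst : s ≤ c + t := by rw [← hs, WithTop.coe_le_coe] at hKA; exact hKA
    rw [← hs, ← ht, WithTop.untopD_coe, WithTop.untopD_coe]
    have h1 : min s (M + y a) ≤ min (t + c) ((M + y b) + c) :=
      le_min (le_trans (min_le_left _ _) (by linarith))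
        (le_trans (min_le_right _ _) (by linarith))
    rw [min_add_add_right] at h1
    linarith

lemma path_pair {j i : Fin n} {q : List (Fin n)} (h : IsPathFrom S j i q)
    (hl : q.length = 2) : q = [j, i] := by
  obtain ⟨h1, h2, -⟩ := h
  match q, hl with
  | [x1, x2], _ =>
    simp only [List.head?_cons, Option.some.injEq] at h1
    rw [List.getLast?_cons_cons, List.getLast?_singleton] at h2
    simp only [Option.some.injEq] at h2
    rw [h1, h2]

lemma map_path {C' : Matrix (Fin n) (Fin n) Trop} (hdag : IsDAG E)
    (hsupp : SupportedOn C E) (hsupp' : SupportedOn C' (EStar E))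
    (hc2 : ∀ a b : Fin n, EStar E a b → kleene C b a ≤ C' b a) :
    ∀ (q : List (Fin n)) (a i : Fin n), IsPathFrom (EStar E) a i q →
      ∃ P, IsPathFrom E a i P ∧ pathWeight (cw C) P ≤ pathWeight (cw C') q ∧
        q.length ≤ P.length := by
  intro q
  induction q with
  | nil => intro a i h; simp [IsPathFrom] at h
  | cons z t ih =>
    intro a i h
    obtain ⟨h1, h2l, h3⟩ := h
    simp only [List.head?_cons, Option.some.injEq] at h1
    subst h1
    cases t with
    | nil =>
      simp only [List.getLast?_singleton, Option.some.injEq] at h2l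
      subst h2l
      exact ⟨[z], ⟨rfl, rfl, by simp⟩, by simp [pathWeight_single], by simp⟩
    | cons b t' =>
      rw [List.getLast?_cons_cons] at h2l
      rw [List.chain'_cons] at h3
      have hES : EStar E z b := h3.1
      have hK := hc2 z b hES
      have hC' : C' b z ≠ ⊤ := (hsupp'.2 b z (Ne.symm hES.1)).mpr hES
      have hKnt : kleene C b z ≠ ⊤ := fun htop => hC' (top_le_iff.mp (htop ▸ hK))
      obtain ⟨p, hp, hpw⟩ := exists_path_of_kleene hsupp hKnt
      have hpw' : pathWeight (cw C) p ≤ cw C' z b := by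
        have h5 := le_trans hpw (le_trans hK (le_of_eq (cw_eq hC')))
        exact_mod_cast h5
      obtain ⟨P', hP', hPw', hPl'⟩ := ih b i ⟨rfl, h2l, h3.2⟩
      obtain ⟨hcat, hcatw⟩ := path_concat (w := cw C) hp hP'
      refine ⟨p ++ P'.tail, hcat, ?_, ?_⟩
      · rw [hcatw, pathWeight_cons]; linarith
      · have hplen : 2 ≤ p.length := path_length_two hp hES.1
        have hP'ne : P' ≠ [] := by
          intro h0; rw [h0] at hP'; simp [IsPathFrom] at hP'
        have hP'len : 1 ≤ P'.length := List.length_pos_iff.mpr hP'ne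
        have htl : P'.tail.length = P'.length - 1 := List.length_tail (l := P')
        simp only [List.length_append, List.length_cons] at *
        omega

end Points

/-- Fix a weighted DAG `(G, w)` with weight matrix `C`, and let `C'` be
the weight matrix of weights `w'` on the transitive closure `G*`. Then `Q(C') = Q(C)` iff
`w'` lies in the cone `w* + cone(e_{j→i} : j→i ∈ E* \ E^♭_w)`, i.e. iff `w'(e) = w*(e)`
for every edge `e` of `G^♭_w` and `w'(e) ≥ w*(e)` for every edge `e ∈ E* \ E^♭_w`
(the entry of the Kleene star `(kleene C) i j` being `w*(j→i)`). -/
theorem stmt6 {n : ℕ} (E : Fin n → Fin n → Prop) (C C' : Matrix (Fin n) (Fin n) Trop)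
    (hdag : IsDAG E) (hsupp : SupportedOn C E) (hsupp' : SupportedOn C' (EStar E)) :
    wdp C' = wdp C ↔
      (∀ j i, InWTR E (cw C) j i → C' i j = kleene C i j) ∧
      (∀ j i, EStar E j i → ¬ InWTR E (cw C) j i → kleene C i j ≤ C' i j) := by
  have hdag' : IsDAG (EStar E) := estar_dag hdag
  constructor
  · intro hQ
    -- the auxiliary interior point y
    set R : ℝ := 1 + (∑ i, ∑ j, |(C i j).untopD 0|) + (∑ i, ∑ j, |(C' i j).untopD 0|)
      with hRdef
    have habs : ∀ (B : Matrix (Fin n) (Fin n) Trop) (a b : Fin n),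
        |(B a b).untopD 0| ≤ ∑ i, ∑ j, |(B i j).untopD 0| := by
      intro B a b
      calc |(B a b).untopD 0| ≤ ∑ j, |(B a j).untopD 0| :=
            Finset.single_le_sum (f := fun j => |(B a j).untopD 0|)
              (fun _ _ => abs_nonneg _) (Finset.mem_univ b)
        _ ≤ ∑ i, ∑ j, |(B i j).untopD 0| :=
            Finset.single_le_sum (f := fun i => ∑ j, |(B i j).untopD 0|)
              (fun i _ => Finset.sum_nonneg (fun _ _ => abs_nonneg _)) (Finset.mem_univ a)
    have hsum1 : (0:ℝ) ≤ ∑ i, ∑ j, |(C i j).untopD 0| :=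
      Finset.sum_nonneg (fun _ _ => Finset.sum_nonneg (fun _ _ => abs_nonneg _))
    have hsum2 : (0:ℝ) ≤ ∑ i, ∑ j, |(C' i j).untopD 0| :=
      Finset.sum_nonneg (fun _ _ => Finset.sum_nonneg (fun _ _ => abs_nonneg _))
    set y : Fin n → ℝ := fun v => -(R * (rk E v : ℝ)) with hydef
    have hyC : y ∈ wdp C := by
      intro a b hab
      by_cases hB : C a b = ⊤
      · simp [hB]
      obtain ⟨c, hc⟩ := WithTop.ne_top_iff_exists.mp hB
      rw [← hc, WithTop.coe_le_coe]
      have hedge : E b a := (hsupp.2 a b hab).mp (by rw [← hc]; exact WithTop.coe_ne_top)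
      have hrk : rk E b < rk E a := rk_lt_of_edge hdag hedge
      have hrkR : (rk E b : ℝ) + 1 ≤ (rk E a : ℝ) := by exact_mod_cast hrk
      have hcv : (C a b).untopD 0 = c := by rw [← hc, WithTop.untopD_coe]
      have hcb : |c| ≤ R - 1 := by
        have := habs C a b
        rw [hcv] at this
        rw [hRdef]; linarith
      have hR0 : (0:ℝ) ≤ R := by have := abs_nonneg c; linarith
      have hprod : 0 ≤ R * ((rk E a : ℝ) - (rk E b : ℝ) - 1) :=
        mul_nonneg hR0 (by linarith)
      have hac : -|c| ≤ c := neg_abs_le c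
      simp only [hydef]
      nlinarith
    have hyC' : y ∈ wdp C' := by
      intro a b hab
      by_cases hB : C' a b = ⊤
      · simp [hB]
      obtain ⟨c, hc⟩ := WithTop.ne_top_iff_exists.mp hB
      rw [← hc, WithTop.coe_le_coe]
      have hedge : EStar E b a := (hsupp'.2 a b hab).mp (by rw [← hc]; exact WithTop.coe_ne_top)
      have hrk : rk E b < rk E a := rk_lt_of_estar hdag hedge
      have hrkR : (rk E b : ℝ) + 1 ≤ (rk E a : ℝ) := by exact_mod_cast hrk
      have hcv : (C' a b).untopD 0 = c := by rw [← hc, WithTop.untopD_coe]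
      have hcb : |c| ≤ R - 1 := by
        have := habs C' a b
        rw [hcv] at this
        rw [hRdef]; linarith
      have hR0 : (0:ℝ) ≤ R := by have := abs_nonneg c; linarith
      have hprod : 0 ≤ R * ((rk E a : ℝ) - (rk E b : ℝ) - 1) :=
        mul_nonneg hR0 (by linarith)
      have hac : -|c| ≤ c := neg_abs_le c
      simp only [hydef]
      nlinarith
    -- condition 2 (in strengthened form)
    have hcond2 : ∀ j i, EStar E j i → kleene C i j ≤ C' i j := by
      intro j i hES
      obtain ⟨p0, hp0⟩ := hES.2
      have hKle := kleene_le_path hdag hsupp (fun a b h => rk_lt_of_edge hdag h) hp0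
      have hKnt : kleene C i j ≠ ⊤ := fun htop => by
        rw [htop] at hKle; exact WithTop.coe_ne_top (top_le_iff.mp hKle)
      obtain ⟨m, hm⟩ := WithTop.ne_top_iff_exists.mp hKnt
      set M : ℝ := |m| + |y i| + |y j| + 1 with hMdef
      set x : Fin n → ℝ := fun v => min ((kleene C v j).untopD (M + y v)) (M + y v)
        with hxdef
      have hx : x ∈ wdp C := colpt_mem hdag hsupp hyC M j
      have hxQ : x ∈ wdp C' := by rw [hQ]; exact hx
      have hxj : x j = 0 := by
        simp only [hxdef]
        rw [kleene_diag hdag hsupp]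
        have h0 : ((0 : Trop)).untopD (M + y j) = (0:ℝ) := rfl
        rw [h0]
        refine min_eq_left ?_
        have := neg_abs_le (y j)
        rw [hMdef]
        have h1 : (0:ℝ) ≤ |m| := abs_nonneg m
        have h2 : (0:ℝ) ≤ |y i| := abs_nonneg _
        linarith
      have hxi : x i = m := by
        simp only [hxdef]
        rw [← hm, WithTop.untopD_coe]
        refine min_eq_left ?_
        have h1 := le_abs_self m
        have h2 := neg_abs_le (y i)
        have h3 : (0:ℝ) ≤ |y j| := abs_nonneg _
        rw [hMdef]
        linarith
      have hcons := hxQ i j (Ne.symm hES.1)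
      rw [hxi, hxj, sub_zero] at hcons
      rw [← hm]
      exact hcons
    refine ⟨?_, fun j i hES _ => hcond2 j i hES⟩
    -- condition 1
    intro j i hwtr
    have hES : EStar E j i := edge_estar hdag hwtr.1
    have hle : kleene C i j ≤ C' i j := hcond2 j i hES
    refine le_antisymm ?_ hle
    by_contra hgt
    push_neg at hgt
    have hKeq : kleene C i j = ((cw C j i : ℝ) : Trop) := kleene_eq_of_wtr hdag hsupp hwtr
    set m : ℝ := cw C j i with hmdef
    set M : ℝ := |m| + |y i| + |y j| + 1 with hMdef
    set x : Fin n → ℝ := fun v => min ((kleene C' v j).untopD (M + y v)) (M + y v)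
      with hxdef
    have hx : x ∈ wdp C' := colpt_mem hdag' hsupp' hyC' M j
    have hxC : x ∈ wdp C := by rw [← hQ]; exact hx
    have hxj : x j = 0 := by
      simp only [hxdef]
      rw [kleene_diag hdag' hsupp']
      have h0 : ((0 : Trop)).untopD (M + y j) = (0:ℝ) := rfl
      rw [h0]
      refine min_eq_left ?_
      have := neg_abs_le (y j)
      have h1 : (0:ℝ) ≤ |m| := abs_nonneg m
      have h2 : (0:ℝ) ≤ |y i| := abs_nonneg _
      rw [hMdef]
      linarith
    have hMyi : m < M + y i := by
      have h1 := le_abs_self m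
      have h2 := neg_abs_le (y i)
      have h3 : (0:ℝ) ≤ |y j| := abs_nonneg _
      rw [hMdef]
      linarith
    have hbig : m < x i := by
      by_cases hK : kleene C' i j = ⊤
      · simp only [hxdef]
        rw [hK]
        have h0 : ((⊤ : Trop)).untopD (M + y i) = M + y i := rfl
        rw [h0, min_self]
        exact hMyi
      · obtain ⟨t, ht⟩ := WithTop.ne_top_iff_exists.mp hK
        have hmt : m < t := by
          obtain ⟨q, hq, hqw⟩ := exists_path_of_kleene hsupp' hK
          obtain ⟨P, hP, hPw, hPl⟩ :=
            map_path hdag hsupp hsupp' (fun a b h => hcond2 a b h) q j i hq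
          have hqt : pathWeight (cw C') q ≤ t := by
            rw [← ht] at hqw; exact_mod_cast hqw
          by_cases hPe : P = [j, i]
          · have hql : q.length = 2 := by
              have h2q := path_length_two hq hES.1
              rw [hPe] at hPl
              simp only [List.length_cons, List.length_singleton, List.length_nil] at hPl
              omega
            have hqeq : q = [j, i] := path_pair hq hql
            have hC'fin : C' i j ≠ ⊤ := (hsupp'.2 i j (Ne.symm hES.1)).mpr hES
            have hc'eq : C' i j = ((cw C' j i : ℝ) : Trop) := cw_eq hC'fin
            have hmc' : m < cw C' j i := by
              rw [hKeq, hc'eq, WithTop.coe_lt_coe] at hgt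
              exact hgt
            rw [hqeq, pathWeight_cons, pathWeight_single, add_zero] at hqt
            linarith
          · have hlt := hwtr.2 P hP hPe
            linarith
        simp only [hxdef]
        rw [← ht, WithTop.untopD_coe]
        exact lt_min hmt hMyi
    have hCfin : C i j ≠ ⊤ := (hsupp.2 i j (Ne.symm hES.1)).mpr hwtr.1
    have hCeq : C i j = ((m : ℝ) : Trop) := cw_eq hCfin
    have hfin := hxC i j (Ne.symm hES.1)
    rw [hxj, sub_zero, hCeq, WithTop.coe_le_coe] at hfin
    linarith
  · rintro ⟨h1, h2⟩
    apply Set.Subset.antisymm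
    · -- wdp C' ⊆ wdp C
      intro x hx i j hij
      by_cases hC : C i j = ⊤
      · simp [hC]
      obtain ⟨c, hc⟩ := WithTop.ne_top_iff_exists.mp hC
      rw [← hc, WithTop.coe_le_coe]
      have hedge : E j i := (hsupp.2 i j hij).mp hC
      have hp : IsPathFrom E j i [j, i] := ⟨rfl, rfl, by simp [hedge]⟩
      obtain ⟨q, hq, hqwtr, hqw⟩ := wtr_replace hdag hsupp (n + 1) [j, i] j i hp (by omega)
      have hcval : cw C j i = c := by
        rw [cw, ← hc, WithTop.untopD_coe]
      have hbound : ∀ a b, InWTR E (cw C) a b → x b - x a ≤ cw C a b := by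
        intro a b hab
        have hne := dag_edge_ne hdag hab.1
        have hC'eq : C' b a = ((cw C a b : ℝ) : Trop) := by
          rw [h1 a b hab, kleene_eq_of_wtr hdag hsupp hab]
        have h5 := hx b a (Ne.symm hne)
        rw [hC'eq, WithTop.coe_le_coe] at h5
        exact h5
      have htel := telescope hbound q j i hqwtr hq.1 hq.2.1
      have hpw2 : pathWeight (cw C) [j, i] = cw C j i := by
        rw [pathWeight_cons, pathWeight_single, add_zero]
      rw [hpw2, hcval] at hqw
      linarith
    · -- wdp C ⊆ wdp C'
      intro x hx i j hij
      by_cases hC : C' i j = ⊤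
      · simp [hC]
      have hES : EStar E j i := (hsupp'.2 i j hij).mp hC
      have hKle : kleene C i j ≤ C' i j := by
        by_cases hW : InWTR E (cw C) j i
        · rw [h1 j i hW]
        · exact h2 j i hES hW
      exact le_trans (wdp_le_kleene hdag hsupp hx i j) hKle
end
end

section
/- Let V ∈ T^{d×n} be doubly ℝ-astic with columns v^{(1)}, …, v^{(n)}. A point x ∈ ℝ^d/ℝ𝟙 lies in the tropical polyhedron tconv(V) if and only if for every coordinate i ∈ [d] there exists j ∈ [n] with v_i^{(j)} < ∞ and x_i − v_i^{(j)} ≥ x_k − v_k^{(j)} for every k ∈ [d] with v_k^{(j)} < ∞; i.e., tconv(V) is the union of the closed covector cells whose covector has an incoming and an outgoing edge at every node. -/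
open scoped Classical
noncomputable section

/-- `V` is doubly ℝ-astic: every row and every column has a finite entry. -/
def DoublyRAstic {d n : ℕ} (V : Matrix (Fin d) (Fin n) Trop) : Prop :=
  (∀ i, ∃ j, V i j ≠ ⊤) ∧ (∀ j, ∃ i, V i j ≠ ⊤)

/-- For doubly ℝ-astic `V`, a point `x` lies in `tconv(V)` iff for
every coordinate `i` there is a generator `v^{(j)}` with `v_i^{(j)} < ∞` such that `x`
lies in the `i`-th closed sector of the tropical hyperplane with apex `v^{(j)}`, i.e.
`x_i − v_i^{(j)} ≥ x_k − v_k^{(j)}` for every `k` with `v_k^{(j)} < ∞`. -/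
theorem stmt17 {d n : ℕ} (V : Matrix (Fin d) (Fin n) Trop) (hV : DoublyRAstic V)
    (x : Fin d → ℝ) :
    x ∈ tconvM V ↔
      ∀ i : Fin d, ∃ j : Fin n, V i j ≠ ⊤ ∧
        ∀ k : Fin d, V k j ≠ ⊤ →
          x k - WithTop.untopD 0 (V k j) ≤ x i - WithTop.untopD 0 (V i j) := by

  obtain ⟨hrow, hcol⟩ := hV
  constructor
  · rintro ⟨lam, hlam⟩ i
    have hx := hlam i
    have hne : (Finset.univ : Finset (Fin n)).Nonempty := by
      by_contra h
      rw [Finset.not_nonempty_iff_eq_empty] at h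
      rw [h] at hx
      simp at hx
    obtain ⟨j, -, hj⟩ := Finset.exists_mem_eq_inf Finset.univ hne
      (fun j => V i j + ((lam j : ℝ) : Trop))
    rw [hj] at hx
    have hVij : V i j ≠ ⊤ := by
      intro h
      rw [h, top_add] at hx
      exact WithTop.coe_ne_top hx
    obtain ⟨a, ha⟩ := WithTop.ne_top_iff_exists.mp hVij
    refine ⟨j, hVij, ?_⟩
    intro k hk
    obtain ⟨b, hb⟩ := WithTop.ne_top_iff_exists.mp hk
    have hxi : x i = a + lam j := by
      rw [← ha, ← WithTop.coe_add] at hx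
      exact_mod_cast hx
    have hxk : x k ≤ b + lam j := by
      have h2 := (hlam k).le.trans (Finset.inf_le (Finset.mem_univ j))
      rw [← hb, ← WithTop.coe_add] at h2
      exact_mod_cast h2
    rw [← ha, ← hb, WithTop.untopD_coe, WithTop.untopD_coe]
    linarith
  · intro h
    have hS : ∀ j, (Finset.univ.filter (fun k => V k j ≠ ⊤)).Nonempty := by
      intro j
      obtain ⟨k, hk⟩ := hcol j
      exact ⟨k, Finset.mem_filter.mpr ⟨Finset.mem_univ k, hk⟩⟩
    set lam : Fin n → ℝ := fun j => (Finset.univ.filter (fun k => V k j ≠ ⊤)).sup' (hS j)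
        (fun k => x k - WithTop.untopD 0 (V k j)) with hlamdef
    refine ⟨lam, fun i => le_antisymm ?_ ?_⟩
    · apply Finset.le_inf
      intro j _
      by_cases hVij : V i j = ⊤
      · rw [hVij, top_add]
        exact le_top
      · obtain ⟨a, ha⟩ := WithTop.ne_top_iff_exists.mp hVij
        have hmem : i ∈ Finset.univ.filter (fun k => V k j ≠ ⊤) :=
          Finset.mem_filter.mpr ⟨Finset.mem_univ i, hVij⟩
        have h1 : x i - WithTop.untopD 0 (V i j) ≤ lam j :=
          Finset.le_sup' (fun k => x k - WithTop.untopD 0 (V k j)) hmem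
        rw [← ha, WithTop.untopD_coe] at h1
        rw [← ha, ← WithTop.coe_add, WithTop.coe_le_coe]
        linarith
    · obtain ⟨j, hVij, hsec⟩ := h i
      obtain ⟨a, ha⟩ := WithTop.ne_top_iff_exists.mp hVij
      refine le_trans (Finset.inf_le (Finset.mem_univ j)) ?_
      have hlamle : lam j ≤ x i - WithTop.untopD 0 (V i j) := by
        apply Finset.sup'_le
        intro k hk
        exact hsec k (Finset.mem_filter.mp hk).2
      rw [← ha, WithTop.untopD_coe] at hlamle
      rw [← ha, ← WithTop.coe_add, WithTop.coe_le_coe]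
      linarith
end
end
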